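/- There exist a constant c > 0 and an integer n₀ such that for every n ≥ n₀ there exists a function f : [n]² → ℝ whose deletion distance from (1,2,3)-fork-freeness is at most 1 and whose Hamming distance from (1,2,3)-fork-freeness is at least c·n. -/
import Mathlib


/-- The coordinatewise (grid) partial order on `[n]²`, modeled as `Fin 2 → Fin n`. -/
def gridLE {n d : ℕ} (x y : Fin d → Fin n) : Prop := ∀ i, x i ≤ y i

/-- Strict grid order: `x ≺ y` iff `x ≼ y` and `x ≠ y`. -/
def gridLT {n d : ℕ} (x y : Fin d → Fin n) : Prop := gridLE x y ∧ x ≠ y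

/-- `f` restricted to `A` contains a `(1,2,3)`-fork appearance: points `p₁, p₂, p₃` with
`p₂ ≺ p₁`, `p₂ ≺ p₃`, `p₁` and `p₃` incomparable, and `f(p₁) < f(p₂) < f(p₃)`. -/
def ForkAppearanceOn {n : ℕ} (f : (Fin 2 → Fin n) → ℝ) (A : Set (Fin 2 → Fin n)) : Prop :=
  ∃ p₁ p₂ p₃ : Fin 2 → Fin n, p₁ ∈ A ∧ p₂ ∈ A ∧ p₃ ∈ A ∧
    gridLT p₂ p₁ ∧ gridLT p₂ p₃ ∧ ¬ gridLE p₁ p₃ ∧ ¬ gridLE p₃ p₁ ∧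
    f p₁ < f p₂ ∧ f p₂ < f p₃

/-- `f` is `(1,2,3)`-fork-free. -/
def ForkFree {n : ℕ} (f : (Fin 2 → Fin n) → ℝ) : Prop :=
  ¬ ForkAppearanceOn f Set.univ

/-- The deletion distance of `f` from `(1,2,3)`-fork-freeness. -/
noncomputable def forkDeletionDist {n : ℕ} (f : (Fin 2 → Fin n) → ℝ) : ℕ :=
  sInf {s : ℕ | ∃ S : Set (Fin 2 → Fin n), S.ncard = s ∧ ¬ ForkAppearanceOn f Sᶜ}

/-- The Hamming distance of `f` from `(1,2,3)`-fork-freeness. -/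
noncomputable def forkHammingDist {n : ℕ} (f : (Fin 2 → Fin n) → ℝ) : ℕ :=
  sInf {s : ℕ | ∃ g : (Fin 2 → Fin n) → ℝ, ForkFree g ∧ {x | f x ≠ g x}.ncard = s}

/-! ### Auxiliary construction -/

/-- The value pattern: on the grid `[m+2]²`, lower-left block gets 3, etc. -/
noncomputable def fval (m x y : ℕ) : ℝ :=
  if x < m then (if y < m then 3 else if y = m then 2 else 3)
  else if x = m then (if y < m then 1 else if y = m then 3/2 else 1)
  else (if y < m then 0 else if y = m then 2 else 3/2)

noncomputable def fgrid (m : ℕ) {n : ℕ} (p : Fin 2 → Fin n) : ℝ :=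
  fval m (p 0).val (p 1).val

lemma fval_nonneg (m x y : ℕ) : 0 ≤ fval m x y := by
  unfold fval; split_ifs <;> norm_num

lemma fval_le_three (m x y : ℕ) : fval m x y ≤ 3 := by
  unfold fval; split_ifs <;> norm_num

lemma fval_lt_one {m x y : ℕ} (h : fval m x y < 1) : m < x ∧ y < m := by
  unfold fval at h; split_ifs at h <;> first | omega | norm_num at h

lemma fval_lt_two {m x y : ℕ} (h : fval m x y < 2) : m ≤ x ∧ (y = m → x = m) := by
  unfold fval at h; split_ifs at h <;> first | omega | norm_num at h

lemma fval_two_lt {m x y : ℕ} (h : 2 < fval m x y) : x < m ∧ y ≠ m := by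
  unfold fval at h; split_ifs at h <;> first | omega | norm_num at h

lemma fval_one_lt {m x y : ℕ} (h : 1 < fval m x y) (hx : m ≤ x) :
    (x = m ∧ y = m) ∨ (m < x ∧ m ≤ y) := by
  unfold fval at h; split_ifs at h <;> first | omega | norm_num at h

lemma fval_eA {m x y : ℕ} (hx : x < m) (hy : y < m) : fval m x y = 3 := by
  unfold fval; rw [if_pos hx, if_pos hy]

lemma fval_eB {m x : ℕ} (hx : x < m) : fval m x m = 2 := by
  unfold fval; rw [if_pos hx, if_neg (by omega), if_pos rfl]

lemma fval_eC {m x : ℕ} (hx : x < m) : fval m x (m+1) = 3 := by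
  unfold fval; rw [if_pos hx, if_neg (by omega), if_neg (by omega)]

lemma fval_eD {m y : ℕ} (hy : y < m) : fval m m y = 1 := by
  unfold fval; rw [if_neg (by omega), if_pos rfl, if_pos hy]

lemma fval_eE (m : ℕ) : fval m m (m+1) = 1 := by
  unfold fval; rw [if_neg (by omega), if_pos rfl, if_neg (by omega), if_neg (by omega)]

lemma fval_eF {m y : ℕ} (hy : y < m) : fval m (m+1) y = 0 := by
  unfold fval; rw [if_neg (by omega), if_neg (by omega), if_pos hy]

lemma fval_eG (m : ℕ) : fval m (m+1) m = 2 := by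
  unfold fval; rw [if_neg (by omega), if_neg (by omega), if_neg (by omega), if_pos rfl]

lemma gridLE_iff' {n : ℕ} {p q : Fin 2 → Fin n} :
    gridLE p q ↔ ((p 0).val ≤ (q 0).val ∧ (p 1).val ≤ (q 1).val) := by
  constructor
  · intro h; exact ⟨h 0, h 1⟩
  · rintro ⟨h0, h1⟩ i
    match i with
    | 0 => exact h0
    | 1 => exact h1

lemma eq_iff' {n : ℕ} {p q : Fin 2 → Fin n} :
    p = q ↔ ((p 0).val = (q 0).val ∧ (p 1).val = (q 1).val) := by
  constructor
  · rintro rfl; exact ⟨rfl, rfl⟩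
  · rintro ⟨h0, h1⟩
    funext i
    match i with
    | 0 => exact Fin.ext h0
    | 1 => exact Fin.ext h1

/-- Deleting the point `o = (m,m)` removes all fork appearances. -/
lemma noForkAux (m n : ℕ) (hn : n = m + 2) :
    ¬ ForkAppearanceOn (fgrid m)
      ({(fun _ => (⟨m, by omega⟩ : Fin n)) }ᶜ : Set (Fin 2 → Fin n)) := by
  rintro ⟨p₁, p₂, p₃, h₁, h₂, h₃, ⟨l21, ne21⟩, ⟨l23, ne23⟩, h13, h31, q₁, q₂⟩
  simp only [Set.mem_compl_iff, Set.mem_singleton_iff] at h₁ h₂ h₃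
  have hp₁ : ¬((p₁ 0).val = m ∧ (p₁ 1).val = m) := by
    rintro ⟨u, v⟩; exact h₁ (eq_iff'.mpr ⟨u, v⟩)
  have hp₂ : ¬((p₂ 0).val = m ∧ (p₂ 1).val = m) := by
    rintro ⟨u, v⟩; exact h₂ (eq_iff'.mpr ⟨u, v⟩)
  have hp₃ : ¬((p₃ 0).val = m ∧ (p₃ 1).val = m) := by
    rintro ⟨u, v⟩; exact h₃ (eq_iff'.mpr ⟨u, v⟩)
  obtain ⟨l21a, l21b⟩ := gridLE_iff'.mp l21
  obtain ⟨l23a, l23b⟩ := gridLE_iff'.mp l23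
  have b10 := (p₁ 0).isLt; have b11 := (p₁ 1).isLt
  have b20 := (p₂ 0).isLt; have b21 := (p₂ 1).isLt
  have b30 := (p₃ 0).isLt; have b31 := (p₃ 1).isLt
  unfold fgrid at q₁ q₂
  have hx : (p₂ 0).val < m ∨ (p₂ 0).val = m ∨ (p₂ 0).val = m + 1 := by omega
  have hy : (p₂ 1).val < m ∨ (p₂ 1).val = m ∨ (p₂ 1).val = m + 1 := by omega
  rcases hx with hx | hx | hx <;> rcases hy with hy | hy | hy
  · -- (<m, <m): value 3
    rw [fval_eA hx hy] at q₂
    have := fval_le_three m (p₃ 0).val (p₃ 1).val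
    linarith
  · -- (<m, =m): value 2, main case A
    rw [hy, fval_eB hx] at q₁ q₂
    obtain ⟨h3x, h3y⟩ := fval_two_lt q₂
    obtain ⟨h1x, h1y⟩ := fval_lt_two q₁
    have hy1 : (p₁ 1).val = m + 1 := by
      by_cases hYm : (p₁ 1).val = m
      · exact absurd ⟨h1y hYm, hYm⟩ hp₁
      · omega
    have hy3 : (p₃ 1).val = m + 1 := by omega
    exact h31 (gridLE_iff'.mpr ⟨by omega, by omega⟩)
  · -- (<m, =m+1): value 3
    rw [hy, fval_eC hx] at q₂
    have := fval_le_three m (p₃ 0).val (p₃ 1).val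
    linarith
  · -- (=m, <m): value 1, main case B
    rw [hx, fval_eD hy] at q₁ q₂
    obtain ⟨h1x, h1y⟩ := fval_lt_one q₁
    have hx3 : m ≤ (p₃ 0).val := by omega
    rcases fval_one_lt q₂ hx3 with ⟨u, v⟩ | ⟨u, v⟩
    · exact hp₃ ⟨u, v⟩
    · exact h13 (gridLE_iff'.mpr ⟨by omega, by omega⟩)
  · -- (=m, =m): p₂ = o
    exact hp₂ ⟨hx, hy⟩
  · -- (=m, =m+1): value 1
    rw [hx, hy, fval_eE m] at q₁
    obtain ⟨_, h1y⟩ := fval_lt_one q₁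
    omega
  · -- (=m+1, <m): value 0
    rw [hx, fval_eF hy] at q₁
    have := fval_nonneg m (p₁ 0).val (p₁ 1).val
    linarith
  · -- (=m+1, =m): value 2
    rw [hx, hy, fval_eG m] at q₂
    obtain ⟨h3x, _⟩ := fval_two_lt q₂
    omega
  · -- (=m+1, =m+1): p₃ = p₂
    exact ne23 (eq_iff'.mpr ⟨by omega, by omega⟩)

/-- Any fork-free `g` differs from `fgrid m` in at least `m` points. -/
lemma hammingAux (m n : ℕ) (hn : n = m + 2) (g : (Fin 2 → Fin n) → ℝ)
    (hg : ForkFree g) : m ≤ ({x | fgrid m x ≠ g x}).ncard := by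
  classical
  set o : Fin 2 → Fin n := fun _ => (⟨m, by omega⟩ : Fin n) with ho
  set D : Set (Fin 2 → Fin n) := {x | fgrid m x ≠ g x} with hD
  by_cases hgo : g o < 2
  · -- use L pairs (k,m) ↦ 2, (k,m+1) ↦ 3; each pair contains a change
    have key : ∀ k : Fin m, ∃ x : Fin 2 → Fin n, x ∈ D ∧ (x 0).val = k.val := by
      intro k
      by_contra hcon
      push_neg at hcon
      set a : Fin 2 → Fin n := ![⟨k.val, by omega⟩, ⟨m, by omega⟩] with ha
      set b : Fin 2 → Fin n := ![⟨k.val, by omega⟩, ⟨m+1, by omega⟩] with hb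
      have a0 : (a 0).val = k.val := rfl
      have a1 : (a 1).val = m := rfl
      have b0 : (b 0).val = k.val := rfl
      have b1 : (b 1).val = m + 1 := rfl
      have hga : g a = 2 := by
        have := hcon a
        rw [a0] at this
        have hmem : a ∉ D := fun hmemD => (this hmemD) rfl
        rw [hD, Set.mem_setOf_eq, not_not] at hmem
        rw [← hmem]
        show fval m (a 0).val (a 1).val = 2
        rw [a0, a1]; exact fval_eB k.isLt
      have hgb : g b = 3 := by
        have := hcon b
        rw [b0] at this
        have hmem : b ∉ D := fun hmemD => (this hmemD) rfl
        rw [hD, Set.mem_setOf_eq, not_not] at hmem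
        rw [← hmem]
        show fval m (b 0).val (b 1).val = 3
        rw [b0, b1]; exact fval_eC k.isLt
      apply hg
      refine ⟨o, a, b, Set.mem_univ _, Set.mem_univ _, Set.mem_univ _, ?_, ?_, ?_, ?_, ?_, ?_⟩
      · refine ⟨gridLE_iff'.mpr ⟨?_, ?_⟩, ?_⟩
        · rw [a0]; show k.val ≤ m; omega
        · rw [a1]
        · intro h
          have := (eq_iff'.mp h).1
          rw [a0] at this
          have : k.val = m := this
          omega
      · refine ⟨gridLE_iff'.mpr ⟨?_, ?_⟩, ?_⟩
        · rw [a0, b0]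
        · rw [a1, b1]; omega
        · intro h
          have := (eq_iff'.mp h).2
          rw [a1, b1] at this; omega
      · intro h
        have := (gridLE_iff'.mp h).1
        rw [b0] at this
        have : m ≤ k.val := this
        omega
      · intro h
        have := (gridLE_iff'.mp h).2
        rw [b1] at this
        have : m + 1 ≤ m := this
        omega
      · rw [hga]; exact hgo
      · rw [hga, hgb]; norm_num
    choose ψ hψmem hψval using key
    have hinj : Function.Injective (fun k : Fin m => (⟨ψ k, hψmem k⟩ : D)) := by
      intro k₁ k₂ h
      apply Fin.ext
      rw [← hψval k₁, ← hψval k₂]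
      simp only [Subtype.mk_eq_mk] at h
      rw [h]
    calc m = Nat.card (Fin m) := by simp
      _ ≤ Nat.card D := Nat.card_le_card_of_injective _ hinj
      _ = D.ncard := Nat.card_coe_set_eq D
  · -- use R pairs (m,k) ↦ 1, (m+1,k) ↦ 0
    push_neg at hgo
    have key : ∀ k : Fin m, ∃ x : Fin 2 → Fin n, x ∈ D ∧ (x 1).val = k.val := by
      intro k
      by_contra hcon
      push_neg at hcon
      set a : Fin 2 → Fin n := ![⟨m, by omega⟩, ⟨k.val, by omega⟩] with ha
      set b : Fin 2 → Fin n := ![⟨m+1, by omega⟩, ⟨k.val, by omega⟩] with hb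
      have a0 : (a 0).val = m := rfl
      have a1 : (a 1).val = k.val := rfl
      have b0 : (b 0).val = m + 1 := rfl
      have b1 : (b 1).val = k.val := rfl
      have hga : g a = 1 := by
        have := hcon a
        rw [a1] at this
        have hmem : a ∉ D := fun hmemD => (this hmemD) rfl
        rw [hD, Set.mem_setOf_eq, not_not] at hmem
        rw [← hmem]
        show fval m (a 0).val (a 1).val = 1
        rw [a0, a1]; exact fval_eD k.isLt
      have hgb : g b = 0 := by
        have := hcon b
        rw [b1] at this
        have hmem : b ∉ D := fun hmemD => (this hmemD) rfl
        rw [hD, Set.mem_setOf_eq, not_not] at hmem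
        rw [← hmem]
        show fval m (b 0).val (b 1).val = 0
        rw [b0, b1]; exact fval_eF k.isLt
      apply hg
      refine ⟨b, a, o, Set.mem_univ _, Set.mem_univ _, Set.mem_univ _, ?_, ?_, ?_, ?_, ?_, ?_⟩
      · refine ⟨gridLE_iff'.mpr ⟨?_, ?_⟩, ?_⟩
        · rw [a0, b0]; omega
        · rw [a1, b1]
        · intro h
          have := (eq_iff'.mp h).1
          rw [a0, b0] at this; omega
      · refine ⟨gridLE_iff'.mpr ⟨?_, ?_⟩, ?_⟩
        · rw [a0]
        · rw [a1]; show k.val ≤ m; omega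
        · intro h
          have := (eq_iff'.mp h).2
          rw [a1] at this
          have : k.val = m := this
          omega
      · intro h
        have := (gridLE_iff'.mp h).1
        rw [b0] at this
        have : m + 1 ≤ m := this
        omega
      · intro h
        have := (gridLE_iff'.mp h).2
        rw [b1] at this
        have : m ≤ k.val := this
        omega
      · rw [hga, hgb]; norm_num
      · rw [hga]; linarith
    choose ψ hψmem hψval using key
    have hinj : Function.Injective (fun k : Fin m => (⟨ψ k, hψmem k⟩ : D)) := by
      intro k₁ k₂ h
      apply Fin.ext
      rw [← hψval k₁, ← hψval k₂]
      simp only [Subtype.mk_eq_mk] at h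
      rw [h]
    calc m = Nat.card (Fin m) := by simp
      _ ≤ Nat.card D := Nat.card_le_card_of_injective _ hinj
      _ = D.ncard := Nat.card_coe_set_eq D

/-- There are `c > 0` and `n₀` such that for every `n ≥ n₀` there is a
function `f : [n]² → ℝ` whose deletion distance from `(1,2,3)`-fork-freeness is at most
`1` and whose Hamming distance from `(1,2,3)`-fork-freeness is at least `c·n`. -/
theorem stmt15 : ∃ c : ℝ, 0 < c ∧ ∃ n₀ : ℕ, ∀ n : ℕ, n₀ ≤ n →
    ∃ f : (Fin 2 → Fin n) → ℝ,
      forkDeletionDist f ≤ 1 ∧ c * (n : ℝ) ≤ (forkHammingDist f : ℝ) := by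
  refine ⟨1/2, by norm_num, 4, fun n hn => ?_⟩
  have hnm : n = (n - 2) + 2 := by omega
  set m : ℕ := n - 2 with hm
  refine ⟨fgrid m, ?_, ?_⟩
  · -- deletion distance ≤ 1
    apply Nat.sInf_le
    exact ⟨{(fun _ => (⟨m, by omega⟩ : Fin n))}, Set.ncard_singleton _, noForkAux m n hnm⟩
  · -- Hamming distance ≥ n/2
    have hlb : m ≤ forkHammingDist (fgrid m : (Fin 2 → Fin n) → ℝ) := by
      apply le_csInf
      · refine ⟨({x | fgrid m x ≠ (fun _ => (0:ℝ)) x}).ncard, (fun _ => (0:ℝ)), ?_, rfl⟩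
        rintro ⟨p₁, p₂, p₃, -, -, -, -, -, -, -, q₁, -⟩
        exact lt_irrefl _ q₁
      · rintro s ⟨g, hg, rfl⟩
        exact hammingAux m n hnm g hg
    have h2 : (m : ℝ) ≤ (forkHammingDist (fgrid m : (Fin 2 → Fin n) → ℝ) : ℝ) := Nat.cast_le.mpr hlb
    have h4 : (4 : ℝ) ≤ (n : ℝ) := by exact_mod_cast hn
    have hm' : (m : ℝ) = (n : ℝ) - 2 := by
      have : (n : ℝ) = (m : ℝ) + 2 := by exact_mod_cast hnm
      linarith
    linarith
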